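/- Let H be a real Hilbert space, let p_1,…,p_N ≥ 0 with ∑_{i=1}^N p_i = 1, let F_i : H → ℝ be convex and differentiable for each i, let F = ∑_{i=1}^N p_i F_i, and let μ > 0, w̃ ∈ H, and B ≥ 1 satisfy ∑_{i=1}^N p_i‖∇F_i(w̃)‖² ≤ B²‖∇F(w̃)‖². For each i let w_i⁺ be a global minimizer of w ↦ F_i(w) + (μ/2)‖w − w̃‖², and let w̃⁺ = ∑_{i=1}^N p_i w_i⁺ + n for some noise vector n ∈ H. Then ‖w̃⁺ − w̃‖ ≤ (B/μ)‖∇F(w̃)‖ + ‖n‖. -/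

import Mathlib

open InnerProductSpace

-- key per-client lemma
lemma prox_dist_le {H : Type*} [NormedAddCommGroup H] [InnerProductSpace ℝ H] [CompleteSpace H]
    (f : H → ℝ) (hconv : ConvexOn ℝ Set.univ f) (hdiff : Differentiable ℝ f)
    (μ : ℝ) (hμ : 0 < μ) (wt wp : H)
    (hmin : ∀ w, f wp + μ / 2 * ‖wp - wt‖ ^ 2 ≤ f w + μ / 2 * ‖w - wt‖ ^ 2) :
    μ * ‖wp - wt‖ ≤ ‖gradient f wt‖ := by
  set d : H := wp - wt with hd
  set g : H := gradient f wt with hg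
  rcases eq_or_ne d 0 with h0 | h0
  · simp [h0, mul_nonneg hμ.le (norm_nonneg _) , norm_nonneg]
  -- Step A: inner g d ≤ f wp - f wt
  have hgrad : HasGradientAt f g wt := (hdiff wt).hasGradientAt
  have hF : HasFDerivAt f (toDual ℝ H g) wt := hasGradientAt_iff_hasFDerivAt.mp hgrad
  have hline : ∀ t : ℝ, HasDerivAt (fun t : ℝ => wt + t • d) d t := fun t => by
    simpa using ((hasDerivAt_id t).smul_const d).const_add wt
  have hF' : HasFDerivAt f (toDual ℝ H g) (wt + (0:ℝ) • d) := by simpa using hF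
  have hφ : HasDerivAt (fun t : ℝ => f (wt + t • d)) (inner ℝ g d : ℝ) 0 := by
    have := hF'.comp_hasDerivAt (0:ℝ) (hline 0)
    simp [Function.comp, InnerProductSpace.toDual_apply_apply] at this
    exact this
  have hφconv : ConvexOn ℝ Set.univ (fun t : ℝ => f (wt + t • d)) := by
    have := hconv.comp_affineMap (AffineMap.lineMap wt (wt + d) : ℝ →ᵃ[ℝ] H)
    convert this.subset (by simp) convex_univ using 2 with t
    · rfl
    · rfl
    · rfl
    · rfl
    · rw [Function.comp_apply, AffineMap.lineMap_apply_module]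
      congr 1
      module
  have hA : (inner ℝ g d : ℝ) ≤ f wp - f wt := by
    have := hφconv.le_slope_of_hasDerivAt (Set.mem_univ (0:ℝ)) (Set.mem_univ (1:ℝ))
      one_pos hφ
    simpa [slope_def_field, hd] using this
  -- Step B: for t ∈ [0,1), f wp - f wt ≤ -μ(1+t)/2 ‖d‖²
  have key : ∀ t ∈ Set.Ico (0:ℝ) 1, μ * (1 + t) / 2 * ‖d‖ ^ 2 ≤ ‖g‖ * ‖d‖ := by
    rintro t ⟨ht0, ht1⟩
    have hm := hmin (wt + t • d)
    have heq : wt + t • d = (1 - t) • wt + t • wp := by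
      simp only [hd]; module
    have hcv : f (wt + t • d) ≤ (1 - t) * f wt + t * f wp := by
      have := hconv.2 (Set.mem_univ wt) (Set.mem_univ wp)
        (by linarith : (0:ℝ) ≤ 1 - t) ht0 (by ring)
      rw [heq]; simpa using this
    have hnorm : ‖(wt + t • d) - wt‖ ^ 2 = t ^ 2 * ‖d‖ ^ 2 := by
      rw [add_sub_cancel_left, norm_smul, mul_pow]
      simp [abs_of_nonneg ht0, sq_abs]
    rw [hnorm] at hm
    have hsub : f wp - f wt ≤ -(μ * (1 + t) / 2) * ‖d‖ ^ 2 := by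
      have h1t : 0 < 1 - t := by linarith
      nlinarith [hm.trans (by nlinarith [hcv] : f (wt + t•d) + μ/2 * (t^2 * ‖d‖^2) ≤ (1-t) * f wt + t * f wp + μ/2 * (t^2*‖d‖^2))]
    have hcs : -(inner ℝ g d : ℝ) ≤ ‖g‖ * ‖d‖ := by
      have := abs_real_inner_le_norm g d
      cases abs_le.mp this with
      | intro h1 h2 => linarith
    nlinarith [hA.trans hsub]
  -- take t → 1
  have hlim : μ * ‖d‖ ^ 2 ≤ ‖g‖ * ‖d‖ := by
    have hne : (nhdsWithin (1:ℝ) (Set.Iio 1)).NeBot := nhdsLT_neBot 1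
    have htend : Filter.Tendsto (fun t : ℝ => μ * (1 + t) / 2 * ‖d‖ ^ 2)
        (nhdsWithin (1:ℝ) (Set.Iio 1)) (nhds (μ * (1 + 1) / 2 * ‖d‖ ^ 2)) := by
      apply Filter.Tendsto.mono_left _ nhdsWithin_le_nhds
      exact (Continuous.tendsto (by continuity) 1)
    have hev : ∀ᶠ t in nhdsWithin (1:ℝ) (Set.Iio 1),
        μ * (1 + t) / 2 * ‖d‖ ^ 2 ≤ ‖g‖ * ‖d‖ := by
      filter_upwards [self_mem_nhdsWithin,
        Filter.eventually_iff_exists_mem.mpr ⟨Set.Ioi (0:ℝ),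
          mem_nhdsWithin_of_mem_nhds (eventually_gt_nhds one_pos), fun t ht => ht⟩] with t h1 h2
      exact key t ⟨le_of_lt h2, h1⟩
    have := le_of_tendsto htend hev
    linarith
  have hd0 : 0 < ‖d‖ := norm_pos_iff.mpr h0
  have : μ * ‖d‖ * ‖d‖ ≤ ‖g‖ * ‖d‖ := by nlinarith
  exact le_of_mul_le_mul_right this hd0

/-- Inequality (C-8): the aggregated exact proximal update with added noise `n`
moves from `wt` by at most `(B/μ)‖∇F(wt)‖ + ‖n‖`. -/
theorem aggregated_prox_step_dist {H : Type*} [NormedAddCommGroup H]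
    [InnerProductSpace ℝ H] [CompleteSpace H]
    (N : ℕ) (p : Fin N → ℝ) (hp : ∀ i, 0 ≤ p i) (hsum : ∑ i, p i = 1)
    (F : Fin N → H → ℝ)
    (hconv : ∀ i, ConvexOn ℝ Set.univ (F i)) (hdiff : ∀ i, Differentiable ℝ (F i))
    (μ : ℝ) (hμ : 0 < μ) (wt : H) (B : ℝ) (hB : 1 ≤ B)
    (hdis : ∑ i, p i * ‖gradient (F i) wt‖ ^ 2 ≤
      B ^ 2 * ‖gradient (fun w => ∑ i, p i * F i w) wt‖ ^ 2)
    (wplus : Fin N → H)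
    (hmin : ∀ i, ∀ w, F i (wplus i) + μ / 2 * ‖wplus i - wt‖ ^ 2 ≤
      F i w + μ / 2 * ‖w - wt‖ ^ 2)
    (n : H) :
    ‖(∑ i, p i • wplus i + n) - wt‖ ≤
      (B / μ) * ‖gradient (fun w => ∑ i, p i * F i w) wt‖ + ‖n‖ := by
  set G : ℝ := ‖gradient (fun w => ∑ i, p i * F i w) wt‖ with hG
  have hG0 : 0 ≤ G := norm_nonneg _
  have hB0 : 0 ≤ B := le_trans zero_le_one hB
  -- per-client bound
  have hper : ∀ i, μ * ‖wplus i - wt‖ ≤ ‖gradient (F i) wt‖ := fun i =>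
    prox_dist_le (F i) (hconv i) (hdiff i) μ hμ wt (wplus i) (hmin i)
  -- Cauchy-Schwarz
  have hcs : (∑ i, p i * ‖gradient (F i) wt‖) ^ 2 ≤
      (∑ i, p i) * ∑ i, p i * ‖gradient (F i) wt‖ ^ 2 := by
    apply Finset.sum_sq_le_sum_mul_sum_of_sq_eq_mul _
      (fun i _ => hp i) (fun i _ => mul_nonneg (hp i) (sq_nonneg _))
    intro i _
    ring
  have hsumg : ∑ i, p i * ‖gradient (F i) wt‖ ≤ B * G := by
    have h1 : (∑ i, p i * ‖gradient (F i) wt‖) ^ 2 ≤ (B * G) ^ 2 := by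
      calc (∑ i, p i * ‖gradient (F i) wt‖) ^ 2
          ≤ (∑ i, p i) * ∑ i, p i * ‖gradient (F i) wt‖ ^ 2 := hcs
        _ = ∑ i, p i * ‖gradient (F i) wt‖ ^ 2 := by rw [hsum, one_mul]
        _ ≤ B ^ 2 * G ^ 2 := hdis
        _ = (B * G) ^ 2 := by ring
    have h2 : 0 ≤ ∑ i, p i * ‖gradient (F i) wt‖ :=
      Finset.sum_nonneg fun i _ => mul_nonneg (hp i) (norm_nonneg _)
    nlinarith [mul_nonneg hB0 hG0]
  -- rewrite the displacement
  have hrw : (∑ i, p i • wplus i + n) - wt = (∑ i, p i • (wplus i - wt)) + n := by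
    have : (wt : H) = ∑ i, p i • wt := by
      rw [← Finset.sum_smul, hsum, one_smul]
    calc (∑ i, p i • wplus i + n) - wt
        = (∑ i, p i • wplus i - ∑ i, p i • wt) + n := by rw [← this]; abel
      _ = (∑ i, p i • (wplus i - wt)) + n := by
          rw [← Finset.sum_sub_distrib]
          congr 1
          exact Finset.sum_congr rfl fun i _ => (smul_sub (p i) _ _).symm
  rw [hrw]
  calc ‖(∑ i, p i • (wplus i - wt)) + n‖
      ≤ ‖∑ i, p i • (wplus i - wt)‖ + ‖n‖ := norm_add_le _ _
    _ ≤ (∑ i, p i * ‖wplus i - wt‖) + ‖n‖ := by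
        gcongr
        refine (norm_sum_le _ _).trans ?_
        apply le_of_eq
        exact Finset.sum_congr rfl fun i _ => by
          rw [norm_smul, Real.norm_eq_abs, abs_of_nonneg (hp i)]
    _ ≤ (∑ i, p i * (‖gradient (F i) wt‖ / μ)) + ‖n‖ := by
        gcongr with i
        · exact hp i
        · rw [le_div_iff₀ hμ, mul_comm]
          exact hper i
    _ = (1 / μ) * (∑ i, p i * ‖gradient (F i) wt‖) + ‖n‖ := by
        rw [Finset.mul_sum]
        congr 1
        exact Finset.sum_congr rfl fun i _ => by ring
    _ ≤ (1 / μ) * (B * G) + ‖n‖ := by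
        have h1μ : (0:ℝ) ≤ 1 / μ := by positivity
        gcongr
    _ = (B / μ) * G + ‖n‖ := by ring
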